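/- Let (X,G) be a graph with uniformly bounded degrees and 𝒞 a cutset of G with sup_{C∈𝒞} diam_G(∂iv C ∪ ∂ov C) < ∞. Then there exists N ∈ ℕ such that every C ∈ 𝒞 is non-nested with at most N cuts D ∈ 𝒞 (C and D are non-nested if they lie on the same E_G-class and all four of C∩D, C∩D̄, C̄∩D, C̄∩D̄ are nonempty). -/

import Mathlib

open Set

/-- A *walk* of length `n` in the (directed presentation of the) edge set `E`. -/
def IsWalk {α : Type*} (E : Set (α × α)) (f : ℕ → α) (n : ℕ) : Prop :=
  ∀ i < n, (f i, f (i + 1)) ∈ E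

/-- Two points are joined by an `E`-path. -/
def Reach {α : Type*} (E : Set (α × α)) (x y : α) : Prop :=
  ∃ (n : ℕ) (f : ℕ → α), f 0 = x ∧ f n = y ∧ IsWalk E f n

/-- The extended path metric `d_E` of a graph, with values in `ℕ∞` (`∞` if no path exists). -/
noncomputable def graphDist {α : Type*} (E : Set (α × α)) (x y : α) : ℕ∞ :=
  sInf {d : ℕ∞ | ∃ (n : ℕ) (f : ℕ → α), d = (n : ℕ∞) ∧ f 0 = x ∧ f n = y ∧ IsWalk E f n}

/-- A graph is *acyclic* if it has no injective cycle (of length at least 3,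
i.e. not doubling back along a single edge). -/
def Acyclic {α : Type*} (E : Set (α × α)) : Prop :=
  ¬ ∃ (f : ℕ → α) (n : ℕ), 3 ≤ n ∧ IsWalk E f n ∧ f n = f 0 ∧
      ∀ i j, i < n → j < n → f i = f j → i = j

/-- `E` is (the directed presentation of) a graph: symmetric and irreflexive. -/
def IsGraph {α : Type*} (E : Set (α × α)) : Prop :=
  (∀ p ∈ E, (p.2, p.1) ∈ E) ∧ ∀ x : α, (x, x) ∉ E

/-- `(α, E)` has uniformly bounded degrees. -/
def BddDeg {α : Type*} (E : Set (α × α)) : Prop :=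
  ∃ d : ℕ, ∀ x : α, {y | (x, y) ∈ E}.encard ≤ (d : ℕ∞)

/-- The `E_G`-class (connected component) of `x`. -/
def cls {α : Type*} (E : Set (α × α)) (x : α) : Set α := {y | Reach E x y}

/-- The complement `C̄ = ω ∖ C` of `C` inside the `E_G`-class(es) of its points. -/
def cCompl {α : Type*} (E : Set (α × α)) (C : Set α) : Set α :=
  {y | y ∉ C ∧ ∃ x ∈ C, Reach E x y}

/-- Inner vertex boundary `∂iv C` of a subset `C` of an `E_G`-class. -/
def innerB {α : Type*} (E : Set (α × α)) (C : Set α) : Set α :=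
  {x | x ∈ C ∧ ∃ y, y ∉ C ∧ (x, y) ∈ E}

/-- Outer vertex boundary `∂ov C = ∂iv C̄` of a subset `C` of an `E_G`-class. -/
def outerB {α : Type*} (E : Set (α × α)) (C : Set α) : Set α :=
  {y | y ∉ C ∧ ∃ x ∈ C, (y, x) ∈ E}

/-- Outer edge boundary `∂oe C = (C × C̄) ∩ E` of a subset `C` of an `E_G`-class. -/
def outerEdgeB {α : Type*} (E : Set (α × α)) (C : Set α) : Set (α × α) :=
  {p | p ∈ E ∧ p.1 ∈ C ∧ p.2 ∉ C}

/-- A *cut* of a graph: a nonempty proper subset of an `E_G`-class with finite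
edge boundary. -/
def IsCut {α : Type*} (E : Set (α × α)) (C : Set α) : Prop :=
  (∃ x₀, x₀ ∈ C ∧ C ⊆ cls E x₀ ∧ C ≠ cls E x₀) ∧ (outerEdgeB E C).Finite

/-- `diam_E(A)`, with values in `ℕ∞`. -/
noncomputable def gdiam {α : Type*} (E : Set (α × α)) (A : Set α) : ℕ∞ :=
  ⨆ x ∈ A, ⨆ y ∈ A, graphDist E x y

/-- `C` and `D` lie on the same `E_G`-class. -/
def SameClass {α : Type*} (E : Set (α × α)) (C D : Set α) : Prop :=
  ∃ x ∈ C, ∃ y ∈ D, Reach E x y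

/-- `C` and `D` are *nested* with each other (complements taken within the class). -/
def NestedPair {α : Type*} (E : Set (α × α)) (C D : Set α) : Prop :=
  C ∩ D = ∅ ∨ C ∩ cCompl E D = ∅ ∨ cCompl E C ∩ D = ∅ ∨ cCompl E C ∩ cCompl E D = ∅

section A
variable {α : Type*} {E : Set (α × α)}

lemma isWalk_of_le {f : ℕ → α} {m n : ℕ} (h : IsWalk E f n) (hm : m ≤ n) : IsWalk E f m :=
  fun i hi => h i (lt_of_lt_of_le hi hm)

lemma walk_append {x y z : α} {n m : ℕ} {f g : ℕ → α}
    (hf0 : f 0 = x) (hfn : f n = y) (hf : IsWalk E f n)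
    (hg0 : g 0 = y) (hgm : g m = z) (hg : IsWalk E g m) :
    ∃ h : ℕ → α, h 0 = x ∧ h (n + m) = z ∧ IsWalk E h (n + m) := by
  set h : ℕ → α := fun i => if i ≤ n then f i else g (i - n) with hh
  have key : ∀ i, n ≤ i → h i = g (i - n) := by
    intro i hi
    rcases eq_or_lt_of_le hi with h1 | h1
    · simp [hh, ← h1, hfn, hg0]
    · simp [hh, Nat.not_le.mpr h1]
  refine ⟨h, by simp [hh, hf0], ?_, ?_⟩
  · rw [key _ (Nat.le_add_right _ _), Nat.add_sub_cancel_left]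
    exact hgm
  · intro i hi
    by_cases hin : i + 1 ≤ n
    · have h2 : i ≤ n := by omega
      show (h i, h (i+1)) ∈ E
      simp only [hh, if_pos hin, if_pos h2]
      exact hf i (by omega)
    · have h2 : n ≤ i := by omega
      show (h i, h (i+1)) ∈ E
      rw [key i h2, key (i+1) (by omega)]
      have h3 : i + 1 - n = (i - n) + 1 := by omega
      rw [h3]
      exact hg (i - n) (by omega)

lemma reach_trans {x y z : α} (h1 : Reach E x y) (h2 : Reach E y z) : Reach E x z := by
  obtain ⟨n, f, hf0, hfn, hf⟩ := h1
  obtain ⟨m, g, hg0, hgm, hg⟩ := h2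
  obtain ⟨h, a, b, c⟩ := walk_append hf0 hfn hf hg0 hgm hg
  exact ⟨n + m, h, a, b, c⟩

lemma isWalk_reverse (hG : IsGraph E) {f : ℕ → α} {n : ℕ} (hf : IsWalk E f n) :
    IsWalk E (fun i => f (n - i)) n := by
  intro i hi
  show (f (n - i), f (n - (i+1))) ∈ E
  have hk : n - i = (n - (i+1)) + 1 := by omega
  rw [hk]
  exact hG.1 _ (hf (n - (i+1)) (by omega))

lemma reach_symm (hG : IsGraph E) {x y : α} (h : Reach E x y) : Reach E y x := by
  obtain ⟨n, f, hf0, hfn, hf⟩ := h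
  exact ⟨n, fun i => f (n - i), by simpa using hfn, by simpa using hf0, isWalk_reverse hG hf⟩

lemma graphDist_le_iff {x y : α} {m : ℕ} :
    graphDist E x y ≤ (m : ℕ∞) ↔ ∃ n ≤ m, ∃ f : ℕ → α, f 0 = x ∧ f n = y ∧ IsWalk E f n := by
  constructor
  · intro h
    by_contra hc
    push_neg at hc
    have hlb : ((m : ℕ∞) + 1) ≤ graphDist E x y := by
      apply le_sInf
      rintro d ⟨n, f, rfl, hf0, hfn, hf⟩
      have hmn : m < n := by
        by_contra hn
        push_neg at hn
        exact hc n hn f hf0 hfn hf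
      exact_mod_cast Nat.succ_le_of_lt hmn
    have hcon := hlb.trans h
    exact absurd hcon (by exact_mod_cast (by omega : ¬ (m + 1 ≤ m)))
  · rintro ⟨n, hn, f, hf0, hfn, hf⟩
    exact le_trans (sInf_le ⟨n, f, rfl, hf0, hfn, hf⟩) (by exact_mod_cast hn)

lemma graphDist_le_add {x y z : α} {m k : ℕ} (h1 : graphDist E x y ≤ (m : ℕ∞))
    (h2 : graphDist E y z ≤ (k : ℕ∞)) : graphDist E x z ≤ ((m + k : ℕ) : ℕ∞) := by
  obtain ⟨n1, hn1, f, hf0, hfn, hf⟩ := graphDist_le_iff.mp h1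
  obtain ⟨n2, hn2, g, hg0, hgm, hg⟩ := graphDist_le_iff.mp h2
  obtain ⟨h, a, b, c⟩ := walk_append hf0 hfn hf hg0 hgm hg
  exact graphDist_le_iff.mpr ⟨n1 + n2, by omega, h, a, b, c⟩

lemma graphDist_symm_le (hG : IsGraph E) {x y : α} {m : ℕ} (h : graphDist E x y ≤ (m : ℕ∞)) :
    graphDist E y x ≤ (m : ℕ∞) := by
  obtain ⟨n, hn, f, hf0, hfn, hf⟩ := graphDist_le_iff.mp h
  exact graphDist_le_iff.mpr
    ⟨n, hn, fun i => f (n - i), by simpa using hfn, by simpa using hf0, isWalk_reverse hG hf⟩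

lemma graphDist_le_of_walk {f : ℕ → α} {n : ℕ} (hf : IsWalk E f n) {i : ℕ} (hi : i ≤ n) :
    graphDist E (f 0) (f i) ≤ (i : ℕ∞) :=
  graphDist_le_iff.mpr ⟨i, le_refl _, f, rfl, rfl, isWalk_of_le hf hi⟩

lemma walk_crossing {C : Set α} {f : ℕ → α} {n : ℕ} (hf : IsWalk E f n)
    (h0 : f 0 ∈ C) (hn : f n ∉ C) :
    ∃ i < n, (∀ j ≤ i, f j ∈ C) ∧ f (i + 1) ∉ C := by
  classical
  have hex : ∃ k, f k ∉ C := ⟨n, hn⟩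
  have hk : f (Nat.find hex) ∉ C := Nat.find_spec hex
  have hk0 : Nat.find hex ≠ 0 := fun h => hk (h ▸ h0)
  have hkn : Nat.find hex ≤ n := Nat.find_le hn
  refine ⟨Nat.find hex - 1, by omega, ?_, ?_⟩
  · intro j hj
    by_contra hmem
    exact Nat.find_min hex (by omega) hmem
  · have h1 : Nat.find hex - 1 + 1 = Nat.find hex := by omega
    rw [h1]; exact hk

lemma walk_stays {S : Set α} (hcl : ∀ a ∈ S, ∀ b, (a, b) ∈ E → b ∈ S)
    {f : ℕ → α} {n : ℕ} (hf : IsWalk E f n) (h0 : f 0 ∈ S) : ∀ i ≤ n, f i ∈ S := by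
  intro i hi
  induction i with
  | zero => exact h0
  | succ j ih => exact hcl _ (ih (by omega)) _ (hf j (by omega))

lemma reach_stays {S : Set α} (hcl : ∀ a ∈ S, ∀ b, (a, b) ∈ E → b ∈ S)
    {x y : α} (h : Reach E x y) (hx : x ∈ S) : y ∈ S := by
  obtain ⟨n, f, hf0, hfn, hf⟩ := h
  exact hfn ▸ walk_stays hcl hf (hf0.symm ▸ hx) n le_rfl

lemma gdiam_le_iff {A : Set α} {m : ℕ∞} :
    gdiam E A ≤ m ↔ ∀ x ∈ A, ∀ y ∈ A, graphDist E x y ≤ m := by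
  simp [gdiam, iSup_le_iff]

lemma cut_exists_outside {C : Set α} (hC : IsCut E C) :
    ∃ x₀ t, x₀ ∈ C ∧ C ⊆ cls E x₀ ∧ Reach E x₀ t ∧ t ∉ C := by
  obtain ⟨⟨x₀, hx₀, hsub, hne⟩, -⟩ := hC
  have hex : ∃ t, t ∈ cls E x₀ ∧ t ∉ C := by
    by_contra h
    push_neg at h
    exact hne (Subset.antisymm hsub (fun t ht => h t ht))
  obtain ⟨t, ht1, ht2⟩ := hex
  exact ⟨x₀, t, hx₀, hsub, ht1, ht2⟩

lemma cut_subset_of_outerEdgeB_eq (hG : IsGraph E) {D₁ D₂ : Set α}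
    (h1 : IsCut E D₁) (heq : outerEdgeB E D₁ = outerEdgeB E D₂) : D₁ ⊆ D₂ := by
  intro z hz
  obtain ⟨x₀, t, hx₀, hsub, hrt, ht⟩ := cut_exists_outside h1
  have hzt : Reach E z t := reach_trans (reach_symm hG (hsub hz)) hrt
  obtain ⟨n, f, hf0, hfn, hf⟩ := hzt
  obtain ⟨i, hi, hall, hout⟩ := walk_crossing hf (hf0.symm ▸ hz) (hfn.symm ▸ ht)
  have hbase : f i ∈ D₂ := by
    have hm : (f i, f (i+1)) ∈ outerEdgeB E D₁ := ⟨hf i hi, hall i le_rfl, hout⟩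
    rw [heq] at hm
    exact hm.2.1
  have key : ∀ j ≤ i, f (i - j) ∈ D₂ := by
    intro j hj
    induction j with
    | zero => simpa using hbase
    | succ k ih =>
      have ihk := ih (by omega)
      by_contra hcon
      have hedge : (f (i - (k+1)), f (i - (k+1) + 1)) ∈ E := hf _ (by omega)
      have hstep : i - (k+1) + 1 = i - k := by omega
      rw [hstep] at hedge
      have hm : (f (i - k), f (i - (k+1))) ∈ outerEdgeB E D₂ := ⟨hG.1 _ hedge, ihk, hcon⟩
      rw [← heq] at hm
      exact hm.2.2 (hall _ (by omega))
  have hfin := key i le_rfl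
  rw [Nat.sub_self, hf0] at hfin
  exact hfin

lemma cut_eq_of_outerEdgeB_eq (hG : IsGraph E) {D₁ D₂ : Set α}
    (h1 : IsCut E D₁) (h2 : IsCut E D₂) (heq : outerEdgeB E D₁ = outerEdgeB E D₂) :
    D₁ = D₂ :=
  Subset.antisymm (cut_subset_of_outerEdgeB_eq hG h1 heq)
    (cut_subset_of_outerEdgeB_eq hG h2 heq.symm)

lemma cut_outerEdgeB_nonempty {C : Set α} (hC : IsCut E C) : (outerEdgeB E C).Nonempty := by
  obtain ⟨x₀, t, hx₀, hsub, ⟨n, f, hf0, hfn, hf⟩, ht⟩ := cut_exists_outside hC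
  obtain ⟨i, hi, hall, hout⟩ := walk_crossing hf (hf0.symm ▸ hx₀) (hfn.symm ▸ ht)
  exact ⟨(f i, f (i+1)), hf i hi, hall i le_rfl, hout⟩

end A

lemma boundary_close {X : Type*} {G : Set (X × X)} (hG : IsGraph G)
    {C D : Set X} {r : ℕ} (hC : IsCut G C) (hD : IsCut G D)
    (hCd : ∀ x ∈ innerB G C ∪ outerB G C, ∀ y ∈ innerB G C ∪ outerB G C,
      graphDist G x y ≤ (r : ℕ∞))
    (hDd : ∀ x ∈ innerB G D ∪ outerB G D, ∀ y ∈ innerB G D ∪ outerB G D,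
      graphDist G x y ≤ (r : ℕ∞))
    (h1 : (C ∩ D).Nonempty) (h2 : (C ∩ cCompl G D).Nonempty)
    (h3 : (cCompl G C ∩ D).Nonempty) (h4 : (cCompl G C ∩ cCompl G D).Nonempty) :
    ∀ w ∈ innerB G D ∪ outerB G D, ∃ c ∈ innerB G C ∪ outerB G C,
      graphDist G c w ≤ ((2 * r : ℕ) : ℕ∞) := by
  obtain ⟨p₀, hp₀C, hp₀D⟩ := h1
  obtain ⟨⟨xC, hxC, hCsub, -⟩, -⟩ := hC
  obtain ⟨⟨xD, hxD, hDsub, -⟩, -⟩ := hD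
  have hC' : ∀ u ∈ C, Reach G p₀ u := fun u hu =>
    reach_trans (reach_symm hG (hCsub hp₀C)) (hCsub hu)
  have hD' : ∀ u ∈ D, Reach G p₀ u := fun u hu =>
    reach_trans (reach_symm hG (hDsub hp₀D)) (hDsub hu)
  have hreach : ∀ z, z ∈ C ∨ z ∈ D ∨ z ∈ cCompl G C ∨ z ∈ cCompl G D → Reach G p₀ z := by
    intro z hz
    rcases hz with h | h | h | h
    · exact hC' z h
    · exact hD' z h
    · obtain ⟨-, x, hx, hr⟩ := h
      exact reach_trans (hC' x hx) hr
    · obtain ⟨-, x, hx, hr⟩ := h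
      exact reach_trans (hD' x hx) hr
  by_cases hDboth : (∃ u ∈ innerB G D ∪ outerB G D, u ∈ C) ∧
      (∃ v ∈ innerB G D ∪ outerB G D, v ∉ C)
  · -- Case i : B_D meets both sides of C
    obtain ⟨⟨u, huB, huC⟩, ⟨v, hvB, hvC⟩⟩ := hDboth
    obtain ⟨n, hn, f, hf0, hfn, hf⟩ := graphDist_le_iff.mp (hDd u huB v hvB)
    obtain ⟨i, hi, hall, hout⟩ := walk_crossing hf (hf0.symm ▸ huC) (hfn.symm ▸ hvC)
    intro w hw
    refine ⟨f i, Or.inl ⟨hall i le_rfl, f (i+1), hout, hf i hi⟩, ?_⟩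
    have d1 : graphDist G u (f i) ≤ (r : ℕ∞) := by
      have h := graphDist_le_of_walk hf hi.le
      rw [hf0] at h
      exact h.trans (by exact_mod_cast (by omega : i ≤ r))
    have d2 : graphDist G (f i) u ≤ (r : ℕ∞) := graphDist_symm_le hG d1
    have d3 : graphDist G u w ≤ (r : ℕ∞) := hDd u huB w hw
    have hfin := graphDist_le_add d2 d3
    rw [show 2 * r = r + r from by omega]
    exact hfin
  by_cases hCboth : (∃ u ∈ innerB G C ∪ outerB G C, u ∈ D) ∧
      (∃ v ∈ innerB G C ∪ outerB G C, v ∉ D)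
  · -- Case ii : B_C meets both sides of D
    obtain ⟨⟨u, huB, huD⟩, ⟨v, hvB, hvD⟩⟩ := hCboth
    obtain ⟨n, hn, f, hf0, hfn, hf⟩ := graphDist_le_iff.mp (hCd u huB v hvB)
    obtain ⟨i, hi, hall, hout⟩ := walk_crossing hf (hf0.symm ▸ huD) (hfn.symm ▸ hvD)
    intro w hw
    refine ⟨u, huB, ?_⟩
    have d1 : graphDist G u (f i) ≤ (r : ℕ∞) := by
      have h := graphDist_le_of_walk hf hi.le
      rw [hf0] at h
      exact h.trans (by exact_mod_cast (by omega : i ≤ r))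
    have d2 : graphDist G (f i) w ≤ (r : ℕ∞) :=
      hDd (f i) (Or.inl ⟨hall i le_rfl, f (i+1), hout, hf i hi⟩) w hw
    have hfin := graphDist_le_add d1 d2
    rw [show 2 * r = r + r from by omega]
    exact hfin
  -- Contradiction territory
  exfalso
  have hDside : (∀ u ∈ innerB G D ∪ outerB G D, u ∈ C) ∨
      (∀ u ∈ innerB G D ∪ outerB G D, u ∉ C) := by
    by_cases h : ∃ u ∈ innerB G D ∪ outerB G D, u ∈ C
    · left; intro v hv; by_contra hvC; exact hDboth ⟨h, v, hv, hvC⟩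
    · right; intro v hv hvC; exact h ⟨v, hv, hvC⟩
  have hCside : (∀ u ∈ innerB G C ∪ outerB G C, u ∈ D) ∨
      (∀ u ∈ innerB G C ∪ outerB G C, u ∉ D) := by
    by_cases h : ∃ u ∈ innerB G C ∪ outerB G C, u ∈ D
    · left; intro v hv; by_contra hvD; exact hCboth ⟨h, v, hv, hvD⟩
    · right; intro v hv hvD; exact h ⟨v, hv, hvD⟩
  rcases hDside with hDs | hDs <;> rcases hCside with hCs | hCs
  · -- B_D ⊆ C, B_C ⊆ D : the corner C̄ ∩ D̄ is closed under edges
    obtain ⟨z, hz⟩ := h4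
    have hcl : ∀ a ∈ {y | y ∉ C ∧ y ∉ D}, ∀ b, (a, b) ∈ G → b ∈ {y | y ∉ C ∧ y ∉ D} := by
      rintro a ⟨haC, haD⟩ b hab
      constructor
      · intro hbC
        exact haD (hCs a (Or.inr ⟨haC, b, hbC, hab⟩))
      · intro hbD
        exact haC (hDs a (Or.inr ⟨haD, b, hbD, hab⟩))
    have hzp : Reach G z p₀ := reach_symm hG (hreach z (Or.inr (Or.inr (Or.inl hz.1))))
    exact (reach_stays hcl hzp ⟨hz.1.1, hz.2.1⟩).1 hp₀C
  · -- B_D ⊆ C, B_C ∩ D = ∅ : the corner C̄ ∩ D is closed under edges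
    obtain ⟨z, hz⟩ := h3
    have hcl : ∀ a ∈ {y | y ∉ C ∧ y ∈ D}, ∀ b, (a, b) ∈ G → b ∈ {y | y ∉ C ∧ y ∈ D} := by
      rintro a ⟨haC, haD⟩ b hab
      constructor
      · intro hbC
        exact hCs a (Or.inr ⟨haC, b, hbC, hab⟩) haD
      · by_contra hbD
        exact haC (hDs a (Or.inl ⟨haD, b, hbD, hab⟩))
    have hzp : Reach G z p₀ := reach_symm hG (hreach z (Or.inr (Or.inr (Or.inl hz.1))))
    exact (reach_stays hcl hzp ⟨hz.1.1, hz.2⟩).1 hp₀C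
  · -- B_D ∩ C = ∅, B_C ⊆ D : the corner C ∩ D̄ is closed under edges
    obtain ⟨z, hz⟩ := h2
    have hcl : ∀ a ∈ {y | y ∈ C ∧ y ∉ D}, ∀ b, (a, b) ∈ G → b ∈ {y | y ∈ C ∧ y ∉ D} := by
      rintro a ⟨haC, haD⟩ b hab
      constructor
      · by_contra hbC
        exact haD (hCs a (Or.inl ⟨haC, b, hbC, hab⟩))
      · intro hbD
        exact hDs a (Or.inr ⟨haD, b, hbD, hab⟩) haC
    have hzp : Reach G z p₀ := reach_symm hG (hreach z (Or.inl hz.1))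
    exact (reach_stays hcl hzp ⟨hz.1, hz.2.1⟩).2 hp₀D
  · -- B_D ∩ C = ∅, B_C ∩ D = ∅ : the corner C ∩ D is closed under edges
    obtain ⟨q, hq⟩ := h3
    have hcl : ∀ a ∈ {y | y ∈ C ∧ y ∈ D}, ∀ b, (a, b) ∈ G → b ∈ {y | y ∈ C ∧ y ∈ D} := by
      rintro a ⟨haC, haD⟩ b hab
      constructor
      · by_contra hbC
        exact hCs a (Or.inl ⟨haC, b, hbC, hab⟩) haD
      · by_contra hbD
        exact hDs a (Or.inl ⟨haD, b, hbD, hab⟩) haC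
    have hpq : Reach G p₀ q := hreach q (Or.inr (Or.inr (Or.inl hq.1)))
    exact hq.1.1 (reach_stays hcl hpq ⟨hp₀C, hp₀D⟩).1

def gball {α : Type*} (E : Set (α × α)) (x : α) (R : ℕ) : Set α :=
  {y | graphDist E x y ≤ (R : ℕ∞)}

section C
variable {α : Type*} {β : Type*} {E : Set (α × α)}

lemma encard_biUnion_le' {s : Set α} (hs : s.Finite) (g : α → Set β) {m : ℕ∞} :
    (∀ a ∈ s, (g a).encard ≤ m) → (⋃ a ∈ s, g a).encard ≤ s.encard * m := by
  refine Set.Finite.induction_on _ hs (by intro _; simp) ?_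
  intro a s ha hsf ih hg
  rw [biUnion_insert, encard_insert_of_notMem ha, add_mul, one_mul]
  calc (g a ∪ ⋃ x ∈ s, g x).encard ≤ (g a).encard + (⋃ x ∈ s, g x).encard := encard_union_le _ _
    _ ≤ m + s.encard * m :=
        add_le_add (hg a (mem_insert _ _)) (ih fun b hb => hg b (mem_insert_of_mem _ hb))
    _ = s.encard * m + m := add_comm _ _

lemma encard_prod_le {s : Set α} {t : Set β} {k m : ℕ}
    (hs : s.encard ≤ (k : ℕ∞)) (ht : t.encard ≤ (m : ℕ∞)) :
    (s ×ˢ t).encard ≤ ((k * m : ℕ) : ℕ∞) := by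
  have hsub : s ×ˢ t ⊆ ⋃ a ∈ s, (fun b => (a, b)) '' t := by
    rintro ⟨a, b⟩ h
    exact mem_biUnion h.1 ⟨b, h.2, rfl⟩
  have hfin : s.Finite := (encard_le_coe_iff.mp hs).1
  calc (s ×ˢ t).encard ≤ _ := encard_le_encard hsub
    _ ≤ s.encard * (m : ℕ∞) := encard_biUnion_le' hfin _ (fun a _ => (encard_image_le _ _).trans ht)
    _ ≤ (k : ℕ∞) * (m : ℕ∞) := mul_le_mul' hs le_rfl
    _ = ((k * m : ℕ) : ℕ∞) := by push_cast; ring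

lemma encard_powerset_le :
    ∀ (k : ℕ) (A : Set α), A.encard ≤ (k : ℕ∞) → {S : Set α | S ⊆ A}.encard ≤ ((2 ^ k : ℕ) : ℕ∞) := by
  intro k
  induction k with
  | zero =>
    intro A hA
    have hA0 : A = ∅ := by
      rw [← encard_eq_zero]
      exact le_antisymm (by exact_mod_cast hA) zero_le
    subst hA0
    have h1 : {S : Set α | S ⊆ ∅} = {∅} := by ext S; simp [subset_empty_iff]
    rw [h1]; simp
  | succ k ih =>
    intro A hA
    rcases eq_empty_or_nonempty A with rfl | ⟨a, ha⟩
    · have h1 : {S : Set α | S ⊆ ∅} = {∅} := by ext S; simp [subset_empty_iff]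
      rw [h1, encard_singleton]
      exact_mod_cast Nat.one_le_two_pow
    · have hA' : (A \ {a}).encard ≤ (k : ℕ∞) := by
        have hd := encard_diff_singleton_add_one ha
        have h5 : (A \ {a}).encard + 1 ≤ (k : ℕ∞) + 1 := by
          rw [hd]
          exact hA.trans_eq (by push_cast; ring)
        exact (ENat.add_le_add_iff_right (by simp)).mp h5
      have hsub : {S : Set α | S ⊆ A} ⊆
          {S | S ⊆ A \ {a}} ∪ (insert a '' {S | S ⊆ A \ {a}}) := by
        intro S hS
        by_cases haS : a ∈ S
        · right
          exact ⟨S \ {a}, fun x hx => ⟨hS hx.1, hx.2⟩,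
            by rw [insert_diff_singleton, insert_eq_of_mem haS]⟩
        · left
          exact fun x hx => ⟨hS hx, fun h => haS (by rwa [mem_singleton_iff.mp h] at hx)⟩
      calc {S : Set α | S ⊆ A}.encard ≤ _ := encard_le_encard hsub
        _ ≤ {S | S ⊆ A \ {a}}.encard + (insert a '' {S | S ⊆ A \ {a}}).encard :=
            encard_union_le _ _
        _ ≤ ((2 ^ k : ℕ) : ℕ∞) + ((2 ^ k : ℕ) : ℕ∞) :=
            add_le_add (ih _ hA') ((encard_image_le _ _).trans (ih _ hA'))
        _ = ((2 ^ (k + 1) : ℕ) : ℕ∞) := by push_cast; ring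

lemma gball_zero (x : α) : gball E x 0 ⊆ {x} := by
  intro y hy
  obtain ⟨n, hn, f, hf0, hfn, -⟩ := graphDist_le_iff.mp hy
  have h0 : n = 0 := by omega
  subst h0
  rw [mem_singleton_iff, ← hfn, hf0]

lemma gball_succ_subset (x : α) (R : ℕ) :
    gball E x (R+1) ⊆ ⋃ z ∈ gball E x R, insert z {y | (z, y) ∈ E} := by
  intro y hy
  obtain ⟨n, hn, f, hf0, hfn, hf⟩ := graphDist_le_iff.mp hy
  by_cases h : n ≤ R
  · exact mem_biUnion (show y ∈ gball E x R from graphDist_le_iff.mpr ⟨n, h, f, hf0, hfn, hf⟩)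
      (mem_insert _ _)
  · have hn' : n = R + 1 := by omega
    subst hn'
    have hz : f R ∈ gball E x R := by
      show graphDist E x (f R) ≤ (R : ℕ∞)
      rw [← hf0]
      exact graphDist_le_of_walk hf (by omega)
    have hyE : (f R, y) ∈ E := by
      rw [← hfn]; exact hf R (Nat.lt_succ_self R)
    exact mem_biUnion hz (mem_insert_iff.mpr (Or.inr hyE))

lemma gball_encard_le {d : ℕ} (hd : ∀ x : α, {y | (x, y) ∈ E}.encard ≤ (d : ℕ∞))
    (x : α) (R : ℕ) : (gball E x R).encard ≤ (((d+1)^R : ℕ) : ℕ∞) := by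
  induction R with
  | zero =>
    have h := (encard_le_encard (gball_zero (E := E) x)).trans_eq (encard_singleton x)
    simpa using h
  | succ R ih =>
    have hfin : (gball E x R).Finite := (encard_le_coe_iff.mp ih).1
    calc (gball E x (R+1)).encard
        ≤ (⋃ z ∈ gball E x R, insert z {y | (z, y) ∈ E}).encard :=
          encard_le_encard (gball_succ_subset x R)
      _ ≤ (gball E x R).encard * (((d+1) : ℕ) : ℕ∞) := by
          refine encard_biUnion_le' hfin _ (fun z _ => ?_)
          refine (encard_insert_le _ _).trans ?_
          push_cast
          exact add_le_add_left (hd z) 1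
      _ ≤ (((d+1)^R : ℕ) : ℕ∞) * (((d+1) : ℕ) : ℕ∞) := mul_le_mul' ih le_rfl
      _ = (((d+1)^(R+1) : ℕ) : ℕ∞) := by push_cast; ring

end C

/-- If `𝒞` is a cutset of a bounded-degree graph with
`sup_{C∈𝒞} diam_G(∂iv C ∪ ∂ov C) < ∞`, then there is `N` such that each `C ∈ 𝒞` is
non-nested with at most `N` cuts `D ∈ 𝒞`. -/
theorem bdd_many_nonnested_cuts {X : Type*} (G : Set (X × X))
    (hG : IsGraph G) (hdeg : BddDeg G)
    (𝒞 : Set (Set X)) (hcut : ∀ C ∈ 𝒞, IsCut G C)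
    (r : ℕ) (hbdd : ∀ C ∈ 𝒞, gdiam G (innerB G C ∪ outerB G C) ≤ (r : ℕ∞)) :
    ∃ N : ℕ, ∀ C ∈ 𝒞,
      {D | D ∈ 𝒞 ∧ SameClass G C D ∧ (C ∩ D).Nonempty ∧ (C ∩ cCompl G D).Nonempty ∧
        (cCompl G C ∩ D).Nonempty ∧ (cCompl G C ∩ cCompl G D).Nonempty}.encard ≤ (N : ℕ∞) := by
  obtain ⟨d, hd⟩ := hdeg
  refine ⟨2 ^ ((d+1)^(3*r) * (d+1)^(3*r)), ?_⟩
  intro C hC𝒞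
  set 𝒟 := {D | D ∈ 𝒞 ∧ SameClass G C D ∧ (C ∩ D).Nonempty ∧ (C ∩ cCompl G D).Nonempty ∧
      (cCompl G C ∩ D).Nonempty ∧ (cCompl G C ∩ cCompl G D).Nonempty} with h𝒟
  have hCcut := hcut C hC𝒞
  obtain ⟨pa, hpa⟩ := cut_outerEdgeB_nonempty hCcut
  set a := pa.1 with ha
  have haI : a ∈ innerB G C := ⟨hpa.2.1, pa.2, hpa.2.2, by simpa using hpa.1⟩
  have hkey : ∀ D ∈ 𝒟, outerEdgeB G D ⊆ (gball G a (3*r)) ×ˢ (gball G a (3*r)) := by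
    intro D hD p hp
    obtain ⟨hD𝒞, -, k1, k2, k3, k4⟩ := hD
    have hDcut := hcut D hD𝒞
    have hclose := boundary_close hG hCcut hDcut
      (gdiam_le_iff.mp (hbdd C hC𝒞)) (gdiam_le_iff.mp (hbdd D hD𝒞)) k1 k2 k3 k4
    have hball : ∀ w ∈ innerB G D ∪ outerB G D, w ∈ gball G a (3*r) := by
      intro w hw
      obtain ⟨c, hc, hcd⟩ := hclose w hw
      have hac : graphDist G a c ≤ (r : ℕ∞) :=
        gdiam_le_iff.mp (hbdd C hC𝒞) a (Or.inl haI) c hc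
      have hsum := graphDist_le_add hac hcd
      show graphDist G a w ≤ ((3*r : ℕ) : ℕ∞)
      rw [show 3*r = r + 2*r from by omega]
      exact hsum
    exact mem_prod.mpr
      ⟨hball p.1 (Or.inl ⟨hp.2.1, p.2, hp.2.2, by simpa using hp.1⟩),
       hball p.2 (Or.inr ⟨hp.2.2, p.1, hp.2.1, hG.1 _ hp.1⟩)⟩
  have hinj : InjOn (outerEdgeB G) 𝒟 := by
    intro D₁ h₁ D₂ h₂ he
    exact cut_eq_of_outerEdgeB_eq hG (hcut D₁ h₁.1) (hcut D₂ h₂.1) he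
  have hball_card : (gball G a (3*r)).encard ≤ (((d+1)^(3*r) : ℕ) : ℕ∞) :=
    gball_encard_le hd a (3*r)
  have hprod := encard_prod_le hball_card hball_card
  have himg : outerEdgeB G '' 𝒟 ⊆ {F | F ⊆ (gball G a (3*r)) ×ˢ (gball G a (3*r))} := by
    rintro F ⟨D, hD, rfl⟩
    exact hkey D hD
  calc 𝒟.encard = (outerEdgeB G '' 𝒟).encard := (hinj.encard_image).symm
    _ ≤ {F | F ⊆ (gball G a (3*r)) ×ˢ (gball G a (3*r))}.encard := encard_le_encard himg
    _ ≤ ((2 ^ ((d+1)^(3*r) * (d+1)^(3*r)) : ℕ) : ℕ∞) := encard_powerset_le _ _ hprod
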